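/- Fix m ≥ 1 and b ∈ {1,…,m}. For each even n ≥ m, let γ_n be a uniformly random even permutation of {1,…,n}, and let B_n be the number of cycles of γ_n that contain at least one element of {1,…,m}. Then as n → ∞, P(B_n = b) converges to c(m,b)/m!, where c(m,b) is the number of permutations of {1,…,m} having exactly b cycles (the unsigned Stirling number of the first kind). -/

import Mathlib

open Finset Filter

/-- The total number of cycles of a permutation (fixed points included). -/
noncomputable def numCycles {N : ℕ} (σ : Equiv.Perm (Fin N)) : ℕ :=
  Nat.card (Quotient (Equiv.Perm.SameCycle.setoid σ))

/-- The number of cycles of `σ` containing at least one element of the set `A`. -/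
noncomputable def numCyclesMeeting {N : ℕ} (σ : Equiv.Perm (Fin N)) (A : Set (Fin N)) : ℕ :=
  Nat.card {c : Quotient (Equiv.Perm.SameCycle.setoid σ) //
    ∃ k ∈ A, Quotient.mk (Equiv.Perm.SameCycle.setoid σ) k = c}

namespace Stmt14Aux

open Equiv Equiv.Perm

/-- `Equiv.permCongr` as a monoid hom. -/
def permCongrHom {β γ : Type*} (e : β ≃ γ) : Perm β →* Perm γ where
  toFun := e.permCongr
  map_one' := by ext x; simp
  map_mul' f g := by ext x; simp [Equiv.Perm.mul_apply]

lemma sameCycle_permCongr {β γ : Type*} (e : β ≃ γ) (τ : Perm β) (a b : β) :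
    (e.permCongr τ).SameCycle (e a) (e b) ↔ τ.SameCycle a b := by
  constructor
  · rintro ⟨i, hi⟩
    refine ⟨i, e.injective ?_⟩
    have h1 : e.permCongr τ ^ i = e.permCongr (τ ^ i) := (map_zpow (permCongrHom e) τ i).symm
    rw [h1] at hi
    simpa using hi
  · rintro ⟨i, hi⟩
    refine ⟨i, ?_⟩
    have h1 : e.permCongr τ ^ i = e.permCongr (τ ^ i) := (map_zpow (permCongrHom e) τ i).symm
    rw [h1]
    simp [hi]

lemma sc_self {α : Type*} (σ : Perm α) (u : α) : σ.SameCycle u (σ u) :=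
  Equiv.Perm.sameCycle_apply_right.mpr Equiv.Perm.SameCycle.rfl

/-- Key lemma: inserting `none` into a permutation does not change the
same-cycle relation among `some` elements. -/
lemma sameCycle_insert {α : Type*} [DecidableEq α] [Finite α] [Nonempty α]
    (x : Option α) (σ : Perm α) (a b : α) :
    (Equiv.swap none x * σ.optionCongr).SameCycle (some a) (some b) ↔
      σ.SameCycle a b := by
  classical
  set τ : Perm (Option α) := Equiv.swap none x * σ.optionCongr with hτ
  constructor
  · -- invariant function
    rintro ⟨i, hi⟩
    let g : Option α → Quotient (Equiv.Perm.SameCycle.setoid σ) := fun w =>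
      Quotient.mk _ (w.getD (x.getD (Classical.arbitrary α)))
    have hg : ∀ w, g (τ w) = g w := by
      intro w
      match w with
      | none =>
        cases hx : x with
        | none => simp [g, hτ, hx, Equiv.swap_self]
        | some x₀ =>
          have : τ none = some x₀ := by simp [hτ, hx]
          simp [g, this, hx]
      | some u =>
        by_cases h : some (σ u) = x
        · have h1 : τ (some u) = none := by simp [hτ, ← h]
          rw [h1]
          show Quotient.mk _ (x.getD _) = Quotient.mk _ u
          rw [← h]
          exact Quotient.sound (sc_self σ u).symm
        · have hne : some (σ u) ≠ none := by simp
          have h1 : τ (some u) = some (σ u) := by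
            simp only [hτ, Perm.mul_apply, optionCongr_apply, Option.map_some]
            rw [Equiv.swap_apply_of_ne_of_ne hne h]
          rw [h1]
          exact Quotient.sound (sc_self σ u).symm
    have hginv : ∀ w, g (τ⁻¹ w) = g w := by
      intro w
      conv_rhs => rw [← (show τ (τ⁻¹ w) = w from Equiv.apply_symm_apply τ w)]
      rw [hg]
    have hgz : ∀ (i : ℤ) (w : Option α), g ((τ ^ i) w) = g w := by
      intro i
      induction i using Int.induction_on with
      | zero => simp
      | succ k ih =>
        intro w
        rw [zpow_add_one, Perm.mul_apply, ih, hg]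
      | pred k ih =>
        intro w
        rw [zpow_sub_one, Perm.mul_apply, ih, hginv]
    have h2 := hgz i (some a)
    rw [hi] at h2
    exact (Quotient.exact h2 : σ.SameCycle b a).symm
  · -- step lemma and induction
    intro hab
    have step : ∀ u : α, τ.SameCycle (some u) (some (σ u)) := by
      intro u
      by_cases h : some (σ u) = x
      · have h1 : τ (some u) = none := by simp [hτ, ← h]
        have h2 : τ none = some (σ u) := by simp [hτ, ← h]
        exact Equiv.Perm.SameCycle.trans ⟨1, by simpa using h1⟩ ⟨1, by simpa using h2⟩
      · have hne : some (σ u) ≠ none := by simp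
        have h1 : τ (some u) = some (σ u) := by
          simp only [hτ, Perm.mul_apply, optionCongr_apply, Option.map_some]
          rw [Equiv.swap_apply_of_ne_of_ne hne h]
        exact ⟨1, by simpa using h1⟩
    obtain ⟨k, -, hk⟩ := hab.exists_pow_eq'
    have key : ∀ k : ℕ, τ.SameCycle (some a) (some ((σ ^ k) a)) := by
      intro k
      induction k with
      | zero => exact Equiv.Perm.SameCycle.rfl
      | succ n ih =>
        refine Equiv.Perm.SameCycle.trans ih ?_
        have := step ((σ ^ n) a)
        rwa [show σ ((σ ^ n) a) = (σ ^ (n+1)) a by rw [pow_succ', Perm.mul_apply]] at this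
    rw [← hk]
    exact key k

/-- ranges of "equality-equivalent" maps have the same cardinality. -/
lemma card_range_eq {ι X Y : Type*} (g₁ : ι → X) (g₂ : ι → Y)
    (h : ∀ i j, g₁ i = g₁ j ↔ g₂ i = g₂ j) :
    Nat.card (Set.range g₁) = Nat.card (Set.range g₂) := by
  classical
  have hf : ∀ x : Set.range g₁, ∃ i, g₁ i = x.1 := fun x => x.2
  refine Nat.card_eq_of_bijective
    (fun x => ⟨g₂ (hf x).choose, Set.mem_range_self _⟩) ⟨?_, ?_⟩
  · rintro ⟨x, hx⟩ ⟨y, hy⟩ hxy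
    have := (h _ _).mpr (Subtype.ext_iff.mp hxy)
    rw [(hf ⟨x, hx⟩).choose_spec, (hf ⟨y, hy⟩).choose_spec] at this
    exact Subtype.ext this
  · rintro ⟨y, i, rfl⟩
    refine ⟨⟨g₁ i, Set.mem_range_self _⟩, Subtype.ext ?_⟩
    exact (h _ _).mp (hf ⟨g₁ i, Set.mem_range_self _⟩).choose_spec

/-- `numCyclesMeeting` as the cardinality of the range of a parametrisation. -/
lemma numCyclesMeeting_eq_range {N : ℕ} (σ : Equiv.Perm (Fin N)) (A : Set (Fin N))
    {ι : Type*} (f : ι → Fin N) (hf : Set.range f = A) :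
    numCyclesMeeting σ A =
      Nat.card (Set.range (fun i => Quotient.mk (Equiv.Perm.SameCycle.setoid σ) (f i))) := by
  apply Nat.card_congr
  apply Equiv.subtypeEquivRight
  intro c
  subst hf
  constructor
  · rintro ⟨k, ⟨i, rfl⟩, hk⟩; exact ⟨i, hk⟩
  · rintro ⟨i, hi⟩; exact ⟨f i, ⟨i, rfl⟩, hi⟩

lemma numCyclesMeeting_univ {N : ℕ} (σ : Equiv.Perm (Fin N)) :
    numCyclesMeeting σ Set.univ = numCycles σ := by
  apply Nat.card_congr
  apply (Equiv.subtypeUnivEquiv ?_)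
  intro c
  obtain ⟨k, rfl⟩ := Quotient.exists_rep c
  exact ⟨k, trivial, rfl⟩

/-- decomposition of a permutation of `Fin (N+1)` by removing the last element. -/
noncomputable def EFin (N : ℕ) : Perm (Fin (N + 1)) ≃ Option (Fin N) × Perm (Fin N) :=
  (finSuccEquivLast.permCongr).trans Equiv.Perm.decomposeOption

lemma EFin_symm_apply (N : ℕ) (x : Option (Fin N)) (p : Perm (Fin N)) :
    (EFin N).symm (x, p) =
      finSuccEquivLast.symm.permCongr (Equiv.swap none x * p.optionCongr) := by
  simp [EFin]

lemma EFin_sign (N : ℕ) (x : Option (Fin N)) (p : Perm (Fin N)) :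
    Perm.sign ((EFin N).symm (x, p)) = (if x = none then 1 else -1) * Perm.sign p := by
  rw [EFin_symm_apply, Perm.sign_permCongr, map_mul]
  congr 1
  cases x with
  | none => simp [Equiv.swap_self]
  | some x₀ => simp [Perm.sign_swap (by simp : (none : Option (Fin N)) ≠ some x₀)]
  · simp

lemma B_transfer {m N : ℕ} (hm : 1 ≤ m) (hmN : m ≤ N)
    (x : Option (Fin N)) (p : Perm (Fin N)) :
    numCyclesMeeting ((EFin N).symm (x, p)) {k : Fin (N + 1) | (k : ℕ) < m} =
      numCyclesMeeting p {k : Fin N | (k : ℕ) < m} := by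
  have : Nonempty (Fin N) := ⟨⟨0, by omega⟩⟩
  set f₁ : Fin m → Fin (N + 1) := fun i => ⟨i.1, by omega⟩ with hf₁
  set f₂ : Fin m → Fin N := fun i => ⟨i.1, by omega⟩ with hf₂
  have hr₁ : Set.range f₁ = {k : Fin (N + 1) | (k : ℕ) < m} := by
    ext k
    constructor
    · rintro ⟨i, rfl⟩; exact i.2
    · intro hk; exact ⟨⟨k.1, hk⟩, by simp [hf₁]⟩
  have hr₂ : Set.range f₂ = {k : Fin N | (k : ℕ) < m} := by
    ext k
    constructor
    · rintro ⟨i, rfl⟩; exact i.2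
    · intro hk; exact ⟨⟨k.1, hk⟩, by simp [hf₂]⟩
  rw [numCyclesMeeting_eq_range _ _ f₁ hr₁, numCyclesMeeting_eq_range _ _ f₂ hr₂]
  apply card_range_eq
  have key : ∀ i j : Fin m,
      ((EFin N).symm (x, p)).SameCycle (f₁ i) (f₁ j) ↔ p.SameCycle (f₂ i) (f₂ j) := by
    intro i j
    rw [EFin_symm_apply]
    have h1 : ∀ i : Fin m, f₁ i = finSuccEquivLast.symm (some (f₂ i)) := by
      intro i
      rw [finSuccEquivLast_symm_some]
      ext
      simp [hf₁, hf₂]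
    rw [h1 i, h1 j, sameCycle_permCongr]
    exact sameCycle_insert x p _ _
  intro i j
  constructor
  · intro h
    exact Quotient.sound ((key i j).mp (Quotient.exact h))
  · intro h
    exact Quotient.sound ((key i j).mpr (Quotient.exact h))


open Classical in
/-- number of permutations of `Fin N` whose number of cycles meeting `[m]` is `b` -/
noncomputable def Fc (m b N : ℕ) : ℕ :=
  (univ.filter fun σ : Perm (Fin N) =>
    numCyclesMeeting σ {k : Fin N | (k : ℕ) < m} = b).card

open Classical in
/-- the corresponding signed count -/
noncomputable def Dz (m b N : ℕ) : ℤ :=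
  ∑ σ ∈ univ.filter (fun σ : Perm (Fin N) =>
      numCyclesMeeting σ {k : Fin N | (k : ℕ) < m} = b),
    ((Perm.sign σ : ℤˣ) : ℤ)

lemma Fc_succ {m b N : ℕ} (hm : 1 ≤ m) (hmN : m ≤ N) :
    Fc m b (N + 1) = (N + 1) * Fc m b N := by
  classical
  unfold Fc
  rw [Finset.card_filter, Finset.card_filter]
  rw [← Fintype.sum_equiv ((EFin N).symm)
      (fun z : Option (Fin N) × Perm (Fin N) =>
        if numCyclesMeeting ((EFin N).symm z) {k : Fin (N+1) | (k : ℕ) < m} = b then 1 else 0)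
      (fun σ : Perm (Fin (N+1)) =>
        if numCyclesMeeting σ {k : Fin (N+1) | (k : ℕ) < m} = b then 1 else 0)
      (fun z => rfl)]
  rw [Fintype.sum_prod_type]
  have h : ∀ (x : Option (Fin N)) (p : Perm (Fin N)),
      (if numCyclesMeeting ((EFin N).symm (x, p)) {k : Fin (N+1) | (k : ℕ) < m} = b
        then (1:ℕ) else 0) =
      (if numCyclesMeeting p {k : Fin N | (k : ℕ) < m} = b then 1 else 0) := by
    intro x p
    rw [B_transfer hm hmN]
  simp_rw [h]
  rw [Finset.sum_const, card_univ, Fintype.card_option, Fintype.card_fin, smul_eq_mul]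

lemma Dz_succ {m b N : ℕ} (hm : 1 ≤ m) (hmN : m ≤ N) :
    Dz m b (N + 1) = (1 - (N : ℤ)) * Dz m b N := by
  classical
  unfold Dz
  rw [Finset.sum_filter, Finset.sum_filter]
  rw [← Fintype.sum_equiv ((EFin N).symm)
      (fun z : Option (Fin N) × Perm (Fin N) =>
        if numCyclesMeeting ((EFin N).symm z) {k : Fin (N+1) | (k : ℕ) < m} = b
          then ((Perm.sign ((EFin N).symm z) : ℤˣ) : ℤ) else 0)
      (fun σ : Perm (Fin (N+1)) =>
        if numCyclesMeeting σ {k : Fin (N+1) | (k : ℕ) < m} = b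
          then ((Perm.sign σ : ℤˣ) : ℤ) else 0)
      (fun z => rfl)]
  rw [Fintype.sum_prod_type]
  have h : ∀ (x : Option (Fin N)) (p : Perm (Fin N)),
      (if numCyclesMeeting ((EFin N).symm (x, p)) {k : Fin (N+1) | (k : ℕ) < m} = b
        then ((Perm.sign ((EFin N).symm (x, p)) : ℤˣ) : ℤ) else 0) =
      (if x = none then (1:ℤ) else -1) *
        (if numCyclesMeeting p {k : Fin N | (k : ℕ) < m} = b
          then ((Perm.sign p : ℤˣ) : ℤ) else 0) := by
    intro x p
    rw [B_transfer hm hmN, EFin_sign]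
    by_cases hb : numCyclesMeeting p {k : Fin N | (k : ℕ) < m} = b
    · simp only [hb, if_true, Units.val_mul]
      by_cases hx : x = none <;> simp [hx]
    · simp [hb]
  simp_rw [h, ← Finset.mul_sum]
  rw [← Finset.sum_mul]
  congr 1
  rw [univ_option, Finset.sum_insertNone]
  simp
  ring

lemma two_mul_card_even (N : ℕ) (hN : 2 ≤ N) :
    2 * ((univ.filter fun σ : Perm (Fin N) => Perm.sign σ = 1).card : ℤ) =
      (N.factorial : ℤ) := by
  classical
  have hsum : ∑ σ : Perm (Fin N), ((Perm.sign σ : ℤˣ) : ℤ) = 0 := by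
    have h01 : (⟨0, by omega⟩ : Fin N) ≠ ⟨1, by omega⟩ := by simp [Fin.ext_iff]
    have hre := Fintype.sum_equiv (Equiv.mulLeft (Equiv.swap (⟨0, by omega⟩ : Fin N) ⟨1, by omega⟩))
      (fun σ : Perm (Fin N) =>
        ((Perm.sign (Equiv.swap (⟨0, by omega⟩ : Fin N) ⟨1, by omega⟩ * σ) : ℤˣ) : ℤ))
      (fun σ : Perm (Fin N) => ((Perm.sign σ : ℤˣ) : ℤ)) (fun σ => rfl)
    have hneg : ∀ σ : Perm (Fin N),
        ((Perm.sign (Equiv.swap (⟨0, by omega⟩ : Fin N) ⟨1, by omega⟩ * σ) : ℤˣ) : ℤ) =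
          -((Perm.sign σ : ℤˣ) : ℤ) := by
      intro σ
      rw [map_mul, Perm.sign_swap h01]
      simp
    simp_rw [hneg] at hre
    rw [Finset.sum_neg_distrib] at hre
    linarith
  have key : ∀ σ : Perm (Fin N),
      (if Perm.sign σ = 1 then (2:ℤ) else 0) = 1 + ((Perm.sign σ : ℤˣ) : ℤ) := by
    intro σ
    rcases Int.units_eq_one_or (Perm.sign σ) with h | h <;> simp [h]
  calc 2 * ((univ.filter fun σ : Perm (Fin N) => Perm.sign σ = 1).card : ℤ)
      = ∑ σ : Perm (Fin N), (if Perm.sign σ = 1 then (2:ℤ) else 0) := by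
        rw [← Finset.sum_filter, Finset.sum_const, nsmul_eq_mul, mul_comm]
    _ = ∑ σ : Perm (Fin N), (1 + ((Perm.sign σ : ℤˣ) : ℤ)) := by simp_rw [key]
    _ = (N.factorial : ℤ) := by
        rw [Finset.sum_add_distrib, hsum, add_zero]
        simp [Finset.card_univ, Fintype.card_perm]


lemma two_mul_evB {m b N : ℕ}
    [inst : DecidablePred fun σ : Perm (Fin N) =>
      Perm.sign σ = 1 ∧ numCyclesMeeting σ {k : Fin N | (k : ℕ) < m} = b] :
    2 * ((univ.filter fun σ : Perm (Fin N) =>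
        Perm.sign σ = 1 ∧ numCyclesMeeting σ {k : Fin N | (k : ℕ) < m} = b).card : ℤ) =
      Fc m b N + Dz m b N := by
  classical
  rw [Finset.card_filter]
  unfold Fc Dz
  rw [Finset.card_filter, Finset.sum_filter]
  push_cast
  rw [← Finset.sum_add_distrib, Finset.mul_sum]
  apply Finset.sum_congr rfl
  intro σ _
  by_cases hB : numCyclesMeeting σ {k : Fin N | (k : ℕ) < m} = b
  · rcases Int.units_eq_one_or (Perm.sign σ) with h | h <;> simp [hB, h]
  · simp [hB]

lemma Fc_base {m b : ℕ} :
    Fc m b m = (univ.filter fun π : Perm (Fin m) => numCycles π = b).card := by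
  classical
  unfold Fc
  have hset : {k : Fin m | (k : ℕ) < m} = Set.univ := by
    ext k; simp [k.2]
  congr 1
  apply Finset.filter_congr
  intro π _
  rw [hset, numCyclesMeeting_univ]

lemma Fc_all {m b : ℕ} (hm : 1 ≤ m) :
    ∀ N, m ≤ N → m.factorial * Fc m b N = Fc m b m * N.factorial := by
  intro N hN
  induction N, hN using Nat.le_induction with
  | base => ring
  | succ N hN ih =>
    rw [Fc_succ hm hN, Nat.factorial_succ]
    calc m.factorial * ((N + 1) * Fc m b N) = (N + 1) * (m.factorial * Fc m b N) := by ring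
    _ = (N + 1) * (Fc m b m * N.factorial) := by rw [ih]
    _ = Fc m b m * ((N + 1) * N.factorial) := by ring

lemma Dz_bound {m b : ℕ} (hm : 1 ≤ m) :
    ∀ K, (Dz m b (m + K)).natAbs ≤ m * ((m - 1) + K).factorial := by
  intro K
  induction K with
  | zero =>
    have h1 : (Dz m b m).natAbs ≤ m.factorial := by
      classical
      have h2 : |Dz m b m| ≤ ((univ.filter fun σ : Perm (Fin m) =>
          numCyclesMeeting σ {k : Fin m | (k : ℕ) < m} = b).card : ℤ) := by
        unfold Dz
        refine le_trans (Finset.abs_sum_le_sum_abs _ _) ?_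
        rw [Finset.card_eq_sum_ones]
        push_cast
        apply Finset.sum_le_sum
        intro i _
        rcases Int.units_eq_one_or (Perm.sign i) with h | h <;> simp [h]
      have h3 : (univ.filter fun σ : Perm (Fin m) =>
          numCyclesMeeting σ {k : Fin m | (k : ℕ) < m} = b).card ≤ m.factorial := by
        calc _ ≤ (univ : Finset (Perm (Fin m))).card := Finset.card_filter_le _ _
          _ = m.factorial := by rw [card_univ, Fintype.card_perm, Fintype.card_fin]
      have h4 : |Dz m b m| ≤ (m.factorial : ℤ) :=
        le_trans h2 (by exact_mod_cast h3)
      rw [Int.abs_eq_natAbs] at h4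
      exact_mod_cast h4
    simpa [Nat.mul_factorial_pred (by omega : m ≠ 0)] using h1
  | succ K ih =>
    have hmN : m ≤ m + K := Nat.le_add_right _ _
    have hstep := Dz_succ (b := b) (N := m + K) hm hmN
    have : (Dz m b (m + (K+1))).natAbs = ((m - 1) + K) * (Dz m b (m + K)).natAbs := by
      rw [show m + (K + 1) = (m + K) + 1 from rfl, hstep, Int.natAbs_mul]
      congr 1
      omega
    rw [this]
    calc ((m - 1) + K) * (Dz m b (m + K)).natAbs
        ≤ ((m - 1) + K) * (m * ((m - 1) + K).factorial) := Nat.mul_le_mul_left _ ih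
      _ = m * (((m - 1) + K) * ((m - 1) + K).factorial) := by ring
      _ ≤ m * (((m - 1) + K + 1) * ((m - 1) + K).factorial) :=
          Nat.mul_le_mul_left _ (Nat.mul_le_mul_right _ (Nat.le_succ _))
      _ = m * ((m - 1) + (K + 1)).factorial := by
          rw [show (m - 1) + (K + 1) = ((m - 1) + K) + 1 from rfl, Nat.factorial_succ]

end Stmt14Aux



open Stmt14Aux in
/-- Fix `m ≥ 1` and `b ∈ {1,…,m}`. For even `n` (written `n = 2ν`),
let `γ_n` be a uniformly random even permutation of `{1,…,n}` and `B_n` the number of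
cycles of `γ_n` meeting `{1,…,m}`. Then `P(B_n = b) → c(m,b)/m!` as `n → ∞`, where
`c(m,b)` is the number of permutations of `{1,…,m}` with exactly `b` cycles (the
unsigned Stirling number of the first kind). -/
theorem stmt_14 (m b : ℕ) (hm : 1 ≤ m) (hb1 : 1 ≤ b) (hbm : b ≤ m) :
    Tendsto
      (fun ν : ℕ =>
        ((univ.filter (fun σ : Equiv.Perm (Fin (2 * ν)) =>
            Equiv.Perm.sign σ = 1 ∧
              numCyclesMeeting σ {k : Fin (2 * ν) | (k : ℕ) < m} = b)).card : ℝ) /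
          ((univ.filter (fun σ : Equiv.Perm (Fin (2 * ν)) =>
            Equiv.Perm.sign σ = 1)).card : ℝ))
      atTop
      (nhds (((univ.filter (fun π : Equiv.Perm (Fin m) => numCycles π = b)).card : ℝ) /
        (Nat.factorial m : ℝ))) := by
  classical
  set c : ℕ := (univ.filter fun π : Equiv.Perm (Fin m) => numCycles π = b).card with hc
  have hmfac : (0:ℝ) < (m.factorial : ℝ) := by exact_mod_cast m.factorial_pos
  have hev : ∀ ν : ℕ, m + 1 ≤ ν →
      ((univ.filter (fun σ : Equiv.Perm (Fin (2 * ν)) =>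
          Equiv.Perm.sign σ = 1 ∧
            numCyclesMeeting σ {k : Fin (2 * ν) | (k : ℕ) < m} = b)).card : ℝ) /
        ((univ.filter (fun σ : Equiv.Perm (Fin (2 * ν)) =>
          Equiv.Perm.sign σ = 1)).card : ℝ)
      = (c : ℝ) / (m.factorial : ℝ) +
          ((Dz m b (2 * ν) : ℤ) : ℝ) / ((2 * ν).factorial : ℝ) := by
    intro ν hν
    have hmN : m ≤ 2 * ν := by omega
    have hN2 : 2 ≤ 2 * ν := by omega
    have hA := two_mul_evB (m := m) (b := b) (N := 2 * ν)
    have hB := two_mul_card_even (2 * ν) hN2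
    have hq : m.factorial * Fc m b (2 * ν) = c * (2 * ν).factorial := by
      rw [Fc_all hm (2 * ν) hmN, Fc_base]
    have hNfac : (0:ℝ) < ((2 * ν).factorial : ℝ) := by exact_mod_cast (2 * ν).factorial_pos
    have hAr : 2 * ((univ.filter (fun σ : Equiv.Perm (Fin (2 * ν)) =>
        Equiv.Perm.sign σ = 1 ∧
          numCyclesMeeting σ {k : Fin (2 * ν) | (k : ℕ) < m} = b)).card : ℝ)
        = (Fc m b (2 * ν) : ℝ) + ((Dz m b (2 * ν) : ℤ) : ℝ) := by exact_mod_cast hA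
    have hBr : 2 * ((univ.filter (fun σ : Equiv.Perm (Fin (2 * ν)) =>
        Equiv.Perm.sign σ = 1)).card : ℝ) = ((2 * ν).factorial : ℝ) := by exact_mod_cast hB
    calc ((univ.filter (fun σ : Equiv.Perm (Fin (2 * ν)) =>
            Equiv.Perm.sign σ = 1 ∧
              numCyclesMeeting σ {k : Fin (2 * ν) | (k : ℕ) < m} = b)).card : ℝ) /
          ((univ.filter (fun σ : Equiv.Perm (Fin (2 * ν)) =>
            Equiv.Perm.sign σ = 1)).card : ℝ)
        = (2 * ((univ.filter (fun σ : Equiv.Perm (Fin (2 * ν)) =>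
            Equiv.Perm.sign σ = 1 ∧
              numCyclesMeeting σ {k : Fin (2 * ν) | (k : ℕ) < m} = b)).card : ℝ)) /
          (2 * ((univ.filter (fun σ : Equiv.Perm (Fin (2 * ν)) =>
            Equiv.Perm.sign σ = 1)).card : ℝ)) := by
          rw [mul_div_mul_left _ _ (two_ne_zero)]
      _ = ((Fc m b (2 * ν) : ℝ) + ((Dz m b (2 * ν) : ℤ) : ℝ)) / ((2 * ν).factorial : ℝ) := by
          rw [hAr, hBr]
      _ = (Fc m b (2 * ν) : ℝ) / ((2 * ν).factorial : ℝ) +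
            ((Dz m b (2 * ν) : ℤ) : ℝ) / ((2 * ν).factorial : ℝ) := add_div _ _ _
      _ = (c : ℝ) / (m.factorial : ℝ) +
            ((Dz m b (2 * ν) : ℤ) : ℝ) / ((2 * ν).factorial : ℝ) := by
          congr 1
          rw [div_eq_div_iff (ne_of_gt hNfac) (ne_of_gt hmfac), mul_comm ((Fc m b (2 * ν) : ℝ)) _]
          exact_mod_cast hq
  have h2ν : Tendsto (fun ν : ℕ => 2 * ν) atTop atTop :=
    tendsto_atTop_mono (fun ν => by simp only [id_eq]; omega) tendsto_id
  have hg : Tendsto (fun ν : ℕ => (m : ℝ) / ((2 * ν : ℕ) : ℝ)) atTop (nhds 0) :=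
    (tendsto_const_div_atTop_nhds_zero_nat (m : ℝ)).comp h2ν
  have h0 : Tendsto (fun ν : ℕ =>
      ((Dz m b (2 * ν) : ℤ) : ℝ) / ((2 * ν).factorial : ℝ)) atTop (nhds 0) := by
    apply squeeze_zero_norm' ?_ hg
    filter_upwards [eventually_ge_atTop (m + 1)] with ν hν
    have hNfac : (0:ℝ) < ((2 * ν).factorial : ℝ) := by exact_mod_cast (2 * ν).factorial_pos
    have hNpos : (0:ℝ) < ((2 * ν : ℕ) : ℝ) := by
      have : 0 < 2 * ν := by omega
      exact_mod_cast this
    obtain ⟨K, hK⟩ : ∃ K, 2 * ν = m + K := ⟨2 * ν - m, by omega⟩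
    have hb2 : (Dz m b (2 * ν)).natAbs ≤ m * (2 * ν - 1).factorial := by
      have hb1 := Dz_bound (b := b) hm K
      rw [hK]
      have : (m - 1) + K = m + K - 1 := by omega
      rw [this] at hb1
      exact hb1
    have habs : |((Dz m b (2 * ν) : ℤ) : ℝ)| ≤ (m : ℝ) * ((2 * ν - 1).factorial : ℝ) := by
      rw [← Int.cast_abs, Int.abs_eq_natAbs]
      exact_mod_cast hb2
    have hfac : ((2 * ν).factorial : ℝ) =
        ((2 * ν : ℕ) : ℝ) * ((2 * ν - 1).factorial : ℝ) := by
      exact_mod_cast (congrArg (fun t : ℕ => (t : ℝ))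
        (Nat.mul_factorial_pred (by omega : 2 * ν ≠ 0))).symm
    have hfacpred : (0:ℝ) < ((2 * ν - 1).factorial : ℝ) := by
      exact_mod_cast (2 * ν - 1).factorial_pos
    calc ‖((Dz m b (2 * ν) : ℤ) : ℝ) / ((2 * ν).factorial : ℝ)‖
        = |((Dz m b (2 * ν) : ℤ) : ℝ)| / ((2 * ν).factorial : ℝ) := by
          rw [Real.norm_eq_abs, abs_div, abs_of_pos hNfac]
      _ ≤ ((m : ℝ) * ((2 * ν - 1).factorial : ℝ)) / ((2 * ν).factorial : ℝ) := by
          apply div_le_div_of_nonneg_right habs hNfac.le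
      _ = (m : ℝ) / ((2 * ν : ℕ) : ℝ) := by
          rw [hfac, mul_div_mul_right _ _ (ne_of_gt hfacpred)]
  have hfinal : Tendsto (fun ν : ℕ => (c : ℝ) / (m.factorial : ℝ) +
      ((Dz m b (2 * ν) : ℤ) : ℝ) / ((2 * ν).factorial : ℝ)) atTop
      (nhds ((c : ℝ) / (m.factorial : ℝ))) := by
    have := (tendsto_const_nhds (x := (c : ℝ) / (m.factorial : ℝ))
      (f := atTop (α := ℕ))).add h0
    simpa using this
  refine hfinal.congr' ?_
  filter_upwards [eventually_ge_atTop (m + 1)] with ν hν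
  exact (hev ν hν).symm
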